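/- arXiv:2512.16054 — 3 statements merged into one kernel-verified Lean document; each statement's English description precedes it below -/
import Mathlib

section
/- Let $A_+ > 0$, $A > 0$, and let $(V_j)_{j\ge 1}$ be complex numbers with $|V_j| \le A^j$ for all $j \ge 1$. Fix $\alpha \in \mathbb{C}$, $v_0 \in \mathbb{C}$, and define $(v_j)_{j \ge 1}$ recursively by $j A_+^2 (j - \alpha) v_j = \sum_{\ell=1}^{j} V_\ell v_{j-\ell}$ (assuming $\alpha \notin \{1,\dots,j\}$ so the recursion is well-defined). Then for every $\varepsilon \in (0, A_+^{-2})$ and every $\alpha$ with $\mathrm{dist}(\alpha, \mathbb{N}_{\ge 1}) > \varepsilon$, one has $|v_j| \le A^j |v_0| / (\varepsilon^j A_+^{2j})$ for all $j \ge 0$. -/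
/-- Estimate on recursively defined Taylor coefficients of the outgoing profile. -/
theorem stmt_0 (Ap A : ℝ) (hAp : 0 < Ap) (hA : 0 < A)
    (V : ℕ → ℂ) (hV : ∀ j : ℕ, 1 ≤ j → ‖V j‖ ≤ A ^ j)
    (α : ℂ) (v : ℕ → ℂ)
    (hrec : ∀ j : ℕ, 1 ≤ j →
      (j : ℂ) * (Ap : ℂ) ^ 2 * ((j : ℂ) - α) * v j = ∑ ℓ ∈ Finset.Icc 1 j, V ℓ * v (j - ℓ))
    (ε : ℝ) (hε : 0 < ε) (hε' : ε < Ap ^ (-2 : ℤ))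
    (hdist : ∀ n : ℕ, 1 ≤ n → ε < ‖α - n‖) :
    ∀ j : ℕ, ‖v j‖ ≤ A ^ j * ‖v 0‖ / (ε ^ j * Ap ^ (2 * j)) := by
  set q : ℝ := ε * Ap ^ 2 with hqdef
  have hq0 : 0 < q := by positivity
  have hqeq : ∀ k : ℕ, ε ^ k * Ap ^ (2 * k) = q ^ k := by
    intro k; rw [hqdef, mul_pow, pow_mul]
  intro j
  induction j using Nat.strong_induction_on with
  | _ j ih =>
  rcases Nat.eq_zero_or_pos j with rfl | hj1
  · simp
  · rw [hqeq j]
    set B : ℝ := A ^ j * ‖v 0‖ / q ^ (j - 1) with hBdef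
    have hBnn : 0 ≤ B := by positivity
    have hq1 : q < 1 := by
      have h2 : (0:ℝ) < Ap ^ 2 := by positivity
      have hinv : Ap ^ (-2 : ℤ) = (Ap ^ 2)⁻¹ := by
        rw [zpow_neg]; norm_cast
      rw [hinv] at hε'
      have := mul_lt_mul_of_pos_right hε' h2
      rwa [inv_mul_cancel₀ (ne_of_gt h2)] at this
    have hsum : ‖∑ ℓ ∈ Finset.Icc 1 j, V ℓ * v (j - ℓ)‖ ≤ j * B := by
      calc ‖∑ ℓ ∈ Finset.Icc 1 j, V ℓ * v (j - ℓ)‖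
          ≤ ∑ ℓ ∈ Finset.Icc 1 j, ‖V ℓ * v (j - ℓ)‖ :=
            norm_sum_le _ _
        _ ≤ ∑ ℓ ∈ Finset.Icc 1 j, B := by
            apply Finset.sum_le_sum
            intro ℓ hℓ
            rw [Finset.mem_Icc] at hℓ
            obtain ⟨hℓ1, hℓj⟩ := hℓ
            have hsub : j - ℓ < j := Nat.sub_lt hj1 hℓ1
            have hih := ih (j - ℓ) hsub
            rw [hqeq (j - ℓ)] at hih
            have hApow : A ^ ℓ * A ^ (j - ℓ) = A ^ j := by
              rw [← pow_add, Nat.add_sub_cancel' hℓj]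
            have hqmono : q ^ (j - 1) ≤ q ^ (j - ℓ) :=
              pow_le_pow_of_le_one hq0.le hq1.le (Nat.sub_le_sub_left hℓ1 j)
            rw [norm_mul]
            calc ‖V ℓ‖ * ‖v (j - ℓ)‖
                ≤ A ^ ℓ * (A ^ (j - ℓ) * ‖v 0‖ / q ^ (j - ℓ)) := by
                  apply mul_le_mul (hV ℓ hℓ1) hih (norm_nonneg _) (by positivity)
              _ = A ^ j * ‖v 0‖ / q ^ (j - ℓ) := by
                  rw [mul_div_assoc', ← mul_assoc, hApow]
              _ ≤ B := by rw [hBdef]; gcongr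
        _ = j * B := by
            rw [Finset.sum_const, Nat.card_Icc, nsmul_eq_mul]
            norm_num
    set d : ℝ := ‖(j : ℂ) - α‖ with hddef
    have hd : ε < d := by
      have := hdist j hj1
      rwa [norm_sub_rev] at this
    have h1 : (j : ℝ) * Ap ^ 2 * d * ‖v j‖
        = ‖∑ ℓ ∈ Finset.Icc 1 j, V ℓ * v (j - ℓ)‖ := by
      have := congrArg (‖·‖) (hrec j hj1)
      simpa [norm_mul, norm_pow, Complex.norm_natCast, Complex.norm_real, Real.norm_eq_abs,
        abs_of_pos hAp] using this
    have hjpos : (0:ℝ) < j := by exact_mod_cast hj1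
    have key : ‖v j‖ * ((j : ℝ) * ε * Ap ^ 2) ≤ (j : ℝ) * B := by
      have hle : (j : ℝ) * ε * Ap ^ 2 ≤ (j : ℝ) * Ap ^ 2 * d := by
        have h2 : (0:ℝ) < Ap ^ 2 := by positivity
        nlinarith [mul_lt_mul_of_pos_left hd (mul_pos hjpos h2)]
      calc ‖v j‖ * ((j : ℝ) * ε * Ap ^ 2)
          ≤ ‖v j‖ * ((j : ℝ) * Ap ^ 2 * d) :=
            mul_le_mul_of_nonneg_left hle (norm_nonneg _)
        _ = (j : ℝ) * Ap ^ 2 * d * ‖v j‖ := by ring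
        _ = _ := h1
        _ ≤ (j : ℝ) * B := hsum
    have key2 : ‖v j‖ * (ε * Ap ^ 2) ≤ B := by
      have := key
      rw [show ‖v j‖ * ((j : ℝ) * ε * Ap ^ 2)
          = (j : ℝ) * (‖v j‖ * (ε * Ap ^ 2)) by ring] at this
      exact le_of_mul_le_mul_left this hjpos
    have hqj : q ^ j = q ^ (j - 1) * (ε * Ap ^ 2) := by
      rw [← hqdef, ← pow_succ, Nat.sub_add_cancel hj1]
    rw [hqj, ← div_div, ← hBdef, le_div_iff₀ (by positivity)]
    exact key2
end

section
/- There exists a constant $C > 0$ such that for all $z \in \mathbb{C}$, $|1/\Gamma(z)| \le C \exp\big(C |z| \log(1 + |z|)\big)$, where $\Gamma$ is the Gamma function. -/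
open Complex MeasureTheory Set

noncomputable def Complex.abs : AbsoluteValue ℂ ℝ := IsAbsoluteValue.toAbsoluteValue (norm : ℂ → ℝ)

lemma Complex.norm_eq_abs (z : ℂ) : ‖z‖ = Complex.abs z := rfl

lemma Complex.abs_apply (z : ℂ) : Complex.abs z = Real.sqrt (Complex.normSq z) := Complex.norm_def z

lemma Complex.abs_exp (z : ℂ) : Complex.abs (Complex.exp z) = Real.exp z.re := Complex.norm_exp z

lemma Complex.abs_I : Complex.abs I = 1 := Complex.norm_I

lemma Complex.abs_two : Complex.abs 2 = 2 := Complex.norm_two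

lemma Complex.abs_ofReal (r : ℝ) : Complex.abs (r : ℂ) = |r| := Complex.norm_real r

lemma Complex.abs_natCast (n : ℕ) : Complex.abs (n : ℂ) = n := Complex.norm_natCast n

lemma Complex.abs_im_le_abs (z : ℂ) : |z.im| ≤ Complex.abs z := Complex.abs_im_le_norm z

lemma Complex.abs_re_le_abs (z : ℂ) : |z.re| ≤ Complex.abs z := Complex.abs_re_le_norm z

lemma Complex.abs_le_abs_re_add_abs_im (z : ℂ) : Complex.abs z ≤ |z.re| + |z.im| :=
  Complex.norm_le_abs_re_add_abs_im z

lemma Complex.abs_cpow_eq_rpow_re_of_pos {x : ℝ} (hx : 0 < x) (y : ℂ) :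
    Complex.abs ((x : ℂ) ^ y) = x ^ y.re := Complex.norm_cpow_eq_rpow_re_of_pos hx y

lemma my_abs_Gamma_le {s : ℂ} (hs : 0 < s.re) :
    Complex.abs (Complex.Gamma s) ≤ Real.Gamma s.re := by
  rw [Complex.Gamma_eq_integral hs, Real.Gamma_eq_integral hs, Complex.GammaIntegral]
  rw [← Complex.norm_eq_abs]
  refine norm_integral_le_of_norm_le (Real.GammaIntegral_convergent hs) ?_
  filter_upwards [ae_restrict_mem measurableSet_Ioi] with x hx
  rw [norm_mul, Complex.norm_eq_abs, Complex.norm_eq_abs, Complex.abs_ofReal,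
    Complex.abs_cpow_eq_rpow_re_of_pos hx, Complex.sub_re, Complex.one_re,
    _root_.abs_of_nonneg (Real.exp_pos _).le]

lemma my_sin_le (z : ℂ) : Complex.abs (Complex.sin z) ≤ Real.exp (Complex.abs z) := by
  rw [Complex.sin]
  have h1 : ∀ w : ℂ, Complex.abs (Complex.exp w) ≤ Real.exp (Complex.abs z) → True := fun _ _ => trivial
  calc Complex.abs ((Complex.exp (-z * I) - Complex.exp (z * I)) * I / 2)
      = Complex.abs (Complex.exp (-z * I) - Complex.exp (z * I)) / 2 := by
        rw [map_div₀, map_mul, Complex.abs_I, mul_one, Complex.abs_two]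
    _ ≤ (Complex.abs (Complex.exp (-z * I)) + Complex.abs (Complex.exp (z * I))) / 2 := by
        gcongr
        exact (Complex.abs.sub_le _ 0 _).trans_eq (by simp)
    _ ≤ Real.exp (Complex.abs z) := by
        rw [Complex.abs_exp, Complex.abs_exp]
        have h2 : (-z * I).re ≤ Complex.abs z := by
          simp only [neg_mul, neg_re, mul_re, I_re, I_im, mul_zero, mul_one, zero_sub]
          obtain ⟨h,h'⟩ := abs_le.1 (Complex.abs_im_le_abs z); linarith
        have h3 : (z * I).re ≤ Complex.abs z := by
          simp only [mul_re, I_re, I_im, mul_zero, mul_one, zero_sub]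
          obtain ⟨h,h'⟩ := abs_le.1 (Complex.abs_im_le_abs z); linarith
        have := Real.exp_le_exp.2 h2
        have := Real.exp_le_exp.2 h3
        linarith

lemma my_Gamma_le_two {x : ℝ} (h1 : 1 ≤ x) (h3 : x ≤ 3) : Real.Gamma x ≤ 2 := by
  have hc := Real.convexOn_Gamma
  have h := hc.2 (mem_Ioi.2 one_pos) (mem_Ioi.2 (by norm_num : (0:ℝ) < 3))
    (by linarith : (0:ℝ) ≤ (3 - x)/2) (by linarith : (0:ℝ) ≤ (x - 1)/2) (by ring)
  have g1 : Real.Gamma 1 = 1 := Real.Gamma_one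
  have g3 : Real.Gamma 3 = 2 := by
    have h2 := Real.Gamma_nat_eq_factorial 2
    have h3 : ((2:ℕ):ℝ) + 1 = 3 := by norm_num
    rw [h3] at h2
    rw [h2]
    norm_num [Nat.factorial]
  rw [smul_eq_mul, smul_eq_mul, smul_eq_mul, smul_eq_mul] at h
  have hx : (3 - x)/2 * 1 + (x - 1)/2 * 3 = x := by ring
  rw [hx, g1, g3] at h
  linarith

lemma my_shift (z : ℂ) : ∀ n : ℕ, (∀ k : ℕ, k < n → z + k ≠ 0) →
    Complex.Gamma (z + n) = (∏ k ∈ Finset.range n, (z + k)) * Complex.Gamma z := by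
  intro n
  induction n with
  | zero => intro _; simp
  | succ n ih =>
    intro h
    have h1 : z + n ≠ 0 := h n (Nat.lt_succ_self n)
    have h2 : Complex.Gamma (z + (n + 1)) = (z + n) * Complex.Gamma (z + n) := by
      have := Complex.Gamma_add_one (z + n) h1
      rw [← this]; ring_nf
    rw [show ((n:ℂ) + 1 : ℂ) = ((n+1 : ℕ) : ℂ) by push_cast; ring] at h2
    rw [h2, ih (fun k hk => h k (hk.trans (Nat.lt_succ_self n))), Finset.prod_range_succ]
    ring

open Real in
lemma my_strip : ∃ M : ℝ, 1 ≤ M ∧ ∀ w : ℂ, 0 ≤ w.re → w.re ≤ 2 →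
    Complex.abs (Complex.Gamma w)⁻¹ ≤ M * Real.exp (π * Complex.abs w) := by
  obtain ⟨B, hB⟩ := (isCompact_closedBall (0:ℂ) 3).exists_bound_of_continuousOn
    (Complex.differentiable_one_div_Gamma.continuous.continuousOn)
  refine ⟨max B 1, le_max_right _ _, fun w h0 h2 => ?_⟩
  have hexp : 1 ≤ Real.exp (π * Complex.abs w) :=
    Real.one_le_exp (mul_nonneg pi_pos.le (Complex.abs.nonneg w))
  by_cases him : |w.im| ≤ 1
  · -- compact region
    have hw3 : w ∈ Metric.closedBall (0:ℂ) 3 := by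
      rw [Metric.mem_closedBall, dist_zero_right, Complex.norm_eq_abs]
      calc Complex.abs w ≤ |w.re| + |w.im| := Complex.abs_le_abs_re_add_abs_im w
        _ ≤ 3 := by rw [_root_.abs_of_nonneg h0]; linarith
    have := hB w hw3
    rw [Complex.norm_eq_abs] at this
    calc Complex.abs (Complex.Gamma w)⁻¹ ≤ B := this
      _ ≤ max B 1 * 1 := by rw [mul_one]; exact le_max_left _ _
      _ ≤ max B 1 * Real.exp (π * Complex.abs w) := by
          exact mul_le_mul_of_nonneg_left hexp (le_trans zero_le_one (le_max_right _ _))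
  · push_neg at him
    have him0 : w.im ≠ 0 := fun h => by simp [h] at him; linarith
    have hGw : Complex.Gamma w ≠ 0 := by
      refine Complex.Gamma_ne_zero fun m hm => him0 ?_
      rw [hm]
      simp
    have hπ : (π : ℂ) ≠ 0 := Complex.ofReal_ne_zero.2 pi_ne_zero
    have hsin : Complex.sin (π * w) ≠ 0 := by
      rw [Complex.sin_ne_zero_iff]
      intro k hk
      apply him0
      have : w = k := by
        have hk' : (π:ℂ) * w = (π:ℂ) * k := by rw [hk]; ring
        exact mul_left_cancel₀ hπ hk' 
      rw [this]; simp
    have key : (Complex.Gamma w)⁻¹ = Complex.Gamma (1 - w) * Complex.sin (π * w) / π := by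
      have h := Complex.Gamma_mul_Gamma_one_sub w
      have h' : Complex.Gamma w * Complex.Gamma (1 - w) * Complex.sin (π * w) = π := by
        rw [h, div_mul_cancel₀ _ hsin]
      rw [eq_div_iff hπ]
      field_simp
      linear_combination -h'
    have h1w : (1 : ℂ) - w ≠ 0 := fun h => him0 (by
      have : w = 1 := by linear_combination -h
      rw [this]; simp)
    have h2w : (2 : ℂ) - w ≠ 0 := fun h => him0 (by
      have : w = 2 := by linear_combination -h
      rw [this]; simp)
    have hshift : Complex.Gamma (3 - w) = (2 - w) * ((1 - w) * Complex.Gamma (1 - w)) := by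
      have e1 : Complex.Gamma ((1 - w) + 1) = (1 - w) * Complex.Gamma (1 - w) :=
        Complex.Gamma_add_one _ h1w
      have e2 : Complex.Gamma ((2 - w) + 1) = (2 - w) * Complex.Gamma (2 - w) :=
        Complex.Gamma_add_one _ h2w
      have e3 : ((1:ℂ) - w) + 1 = 2 - w := by ring
      have e4 : ((2:ℂ) - w) + 1 = 3 - w := by ring
      rw [e3] at e1
      rw [e4] at e2
      rw [e2, e1]
    have habs1 : Complex.abs (Complex.Gamma (1 - w)) ≤ 2 := by
      have h3 : Complex.abs (Complex.Gamma (3 - w)) ≤ Real.Gamma ((3 - w : ℂ).re) := by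
        apply my_abs_Gamma_le
        have hre0 : ((3 - w : ℂ)).re = 3 - w.re := by simp
        rw [hre0]; linarith
      have hre : ((3 - w : ℂ)).re = 3 - w.re := by simp
      have hG2 : Real.Gamma ((3 - w : ℂ).re) ≤ 2 := by
        rw [hre]; exact my_Gamma_le_two (by linarith) (by linarith)
      have habs3 : Complex.abs (Complex.Gamma (3 - w)) =
          Complex.abs (2 - w) * (Complex.abs (1 - w) * Complex.abs (Complex.Gamma (1 - w))) := by
        rw [hshift, map_mul, map_mul]
      have hb1 : 1 ≤ Complex.abs (1 - w) := by
        calc (1:ℝ) ≤ |w.im| := him.le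
          _ = |(1 - w : ℂ).im| := by simp
          _ ≤ Complex.abs (1 - w) := Complex.abs_im_le_abs _
      have hb2 : 1 ≤ Complex.abs (2 - w) := by
        calc (1:ℝ) ≤ |w.im| := him.le
          _ = |(2 - w : ℂ).im| := by simp
          _ ≤ Complex.abs (2 - w) := Complex.abs_im_le_abs _
      have h01 : (0:ℝ) ≤ Complex.abs (Complex.Gamma (1 - w)) := Complex.abs.nonneg _
      have hg : Complex.abs (Complex.Gamma (1 - w)) ≤
          Complex.abs (2 - w) * (Complex.abs (1 - w) * Complex.abs (Complex.Gamma (1 - w))) := by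
        calc Complex.abs (Complex.Gamma (1 - w)) = 1 * (1 * Complex.abs (Complex.Gamma (1 - w))) := by ring
          _ ≤ Complex.abs (2 - w) * (Complex.abs (1 - w) * Complex.abs (Complex.Gamma (1 - w))) := by
            gcongr
      linarith
    have hsinb : Complex.abs (Complex.sin (π * w)) ≤ Real.exp (π * Complex.abs w) := by
      have := my_sin_le (π * w)
      rwa [map_mul, Complex.abs_ofReal, abs_of_pos pi_pos] at this
    rw [key, map_div₀, map_mul, Complex.abs_ofReal, abs_of_pos pi_pos]
    calc Complex.abs (Complex.Gamma (1 - w)) * Complex.abs (Complex.sin (π * w)) / π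
        ≤ 2 * Real.exp (π * Complex.abs w) / π := by
          gcongr
      _ ≤ max B 1 * Real.exp (π * Complex.abs w) := by
          have hE := Real.exp_pos (π * Complex.abs w)
          have step1 : 2 * Real.exp (π * Complex.abs w) / π ≤ Real.exp (π * Complex.abs w) := by
            rw [div_le_iff₀ pi_pos]
            nlinarith [mul_pos hE (by linarith [Real.pi_gt_three] : (0:ℝ) < π - 2)]
          have step2 := mul_le_mul_of_nonneg_right (le_max_right B 1)
            (le_of_lt hE : (0:ℝ) ≤ Real.exp (π * Complex.abs w))
          rw [one_mul] at step2
          linarith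

set_option maxHeartbeats 1000000 in
open Real in
lemma my_mid : ∃ A : ℝ, 1 ≤ A ∧ ∀ z : ℂ, Complex.abs (Complex.Gamma z)⁻¹ ≤
    A * Real.exp (A * (1 + Complex.abs z) * Real.log (2 + Complex.abs z)) := by
  obtain ⟨M, hM1, hM⟩ := my_strip
  refine ⟨M + 7, by linarith, fun z => ?_⟩
  set r := Complex.abs z with hr
  have hr0 : 0 ≤ r := Complex.abs.nonneg z
  have hlog2 : (0:ℝ) < Real.log 2 := Real.log_pos (by norm_num)
  have hlog2' : Real.log 2 ≤ Real.log (2 + r) := by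
    apply Real.log_le_log (by norm_num); linarith
  have hlogpos : 0 < Real.log (2 + r) := lt_of_lt_of_le hlog2 hlog2'
  have hlog2d : (0.6931471803 : ℝ) < Real.log 2 := Real.log_two_gt_d9
  have hpi : π < 3.15 := Real.pi_lt_d2
  -- key inequality for the strip-type bound
  have hstriptype : ∀ w : ℂ, Complex.abs w ≤ r → 0 ≤ w.re → w.re ≤ 2 →
      M * Real.exp (π * Complex.abs w) ≤
      (M + 7) * Real.exp ((M + 7) * (1 + r) * Real.log (2 + r)) := by
    intro w hwr hw0 hw2
    have h1 : π * Complex.abs w ≤ (M + 7) * (1 + r) * Real.log (2 + r) := by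
      have e1 : π * Complex.abs w ≤ π * (1 + r) := by
        apply mul_le_mul_of_nonneg_left (by linarith) pi_pos.le
      have e2 : π * (1 + r) ≤ ((M + 7) * Real.log (2 + r)) * (1 + r) := by
        apply mul_le_mul_of_nonneg_right _ (by linarith)
        calc π ≤ 3.15 := hpi.le
          _ ≤ 8 * 0.6931471803 := by norm_num
          _ ≤ (M + 7) * Real.log (2 + r) := by
            apply mul_le_mul (by linarith) (le_trans hlog2d.le hlog2') (by norm_num) (by linarith)
      calc π * Complex.abs w ≤ π * (1 + r) := e1
        _ ≤ ((M + 7) * Real.log (2 + r)) * (1 + r) := e2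
        _ = (M + 7) * (1 + r) * Real.log (2 + r) := by ring
    have := Real.exp_le_exp.2 h1
    have hMle : M ≤ M + 7 := by linarith
    nlinarith [Real.exp_pos (π * Complex.abs w), Real.exp_pos ((M + 7) * (1 + r) * Real.log (2 + r))]
  rcases le_or_gt z.re 2 with hre2 | hre2
  · rcases le_or_gt 0 z.re with hre0 | hre0
    · -- strip case
      exact le_trans (hM z hre0 hre2) (hstriptype z le_rfl hre0 hre2)
    · -- left case
      by_cases hneg : ∃ m : ℕ, z = -(m : ℂ)
      · obtain ⟨m, rfl⟩ := hneg
        rw [Complex.Gamma_neg_nat_eq_zero, inv_zero, map_zero]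
        positivity
      · push_neg at hneg
        set n : ℕ := ⌈-z.re⌉₊ with hn
        have hnr : -z.re ≤ (n : ℝ) := Nat.le_ceil _
        have hnr2 : (n : ℝ) < -z.re + 1 := Nat.ceil_lt_add_one (by linarith)
        have hrre : -z.re ≤ r := by
          calc -z.re ≤ |z.re| := neg_le_abs _
            _ ≤ r := Complex.abs_re_le_abs z
        have hnr3 : (n : ℝ) ≤ r + 1 := by linarith
        have hzk : ∀ k : ℕ, k < n → z + (k : ℂ) ≠ 0 := by
          intro k _ h
          exact hneg k (by linear_combination h)
        have heq := my_shift z n hzk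
        set P := ∏ k ∈ Finset.range n, (z + (k : ℂ)) with hP
        have hPne : P ≠ 0 := Finset.prod_ne_zero_iff.2 fun k hk => hzk k (Finset.mem_range.1 hk)
        have hkey : (Complex.Gamma z)⁻¹ = P * (Complex.Gamma (z + n))⁻¹ := by
          rw [heq, mul_inv, ← mul_assoc, mul_inv_cancel₀ hPne, one_mul]
        have hzn0 : 0 ≤ (z + n).re := by
          simp only [Complex.add_re, Complex.natCast_re]; linarith
        have hzn2 : (z + n).re ≤ 2 := by
          simp only [Complex.add_re, Complex.natCast_re]; linarith
        have hznabs : Complex.abs (z + n) ≤ 1 + r := by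
          calc Complex.abs (z + n) ≤ |(z + n).re| + |(z + n).im| :=
              Complex.abs_le_abs_re_add_abs_im _
            _ ≤ 1 + r := by
              have h1 : |(z + n).re| ≤ 1 := by
                rw [_root_.abs_of_nonneg hzn0]
                simp only [Complex.add_re, Complex.natCast_re]; linarith
              have h2 : |(z + n).im| ≤ r := by
                simp only [Complex.add_im, Complex.natCast_im, add_zero]
                exact Complex.abs_im_le_abs z
              linarith
        -- bound abs P
        have hPb : Complex.abs P ≤ (2 * r + 2) ^ n := by
          rw [hP, map_prod]
          calc ∏ k ∈ Finset.range n, Complex.abs (z + (k : ℂ))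
              ≤ ∏ _k ∈ Finset.range n, (2 * r + 2) := by
                apply Finset.prod_le_prod (fun _ _ => Complex.abs.nonneg _)
                intro k hk
                calc Complex.abs (z + (k : ℂ)) ≤ Complex.abs z + Complex.abs (k : ℂ) :=
                    Complex.abs.add_le _ _
                  _ = r + k := by rw [Complex.abs_natCast]
                  _ ≤ 2 * r + 2 := by
                    have : (k : ℝ) ≤ n := by
                      exact_mod_cast (Finset.mem_range.1 hk).le
                    linarith
            _ = (2 * r + 2) ^ n := by rw [Finset.prod_const, Finset.card_range]
        have hpow : (2 * r + 2 : ℝ) ^ n = Real.exp (n * Real.log (2 * r + 2)) := by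
          rw [← Real.log_pow, Real.exp_log (pow_pos (by linarith) n)]
        have hexplog : (n : ℝ) * Real.log (2 * r + 2) ≤ 2 * (1 + r) * Real.log (2 + r) := by
          have hb1 : Real.log (2 * r + 2) ≤ 2 * Real.log (2 + r) := by
            have e1 : Real.log (2 * r + 2) ≤ Real.log ((2 + r) ^ 2) :=
              Real.log_le_log (by linarith) (by nlinarith)
            have e2 : Real.log ((2 + r) ^ 2) = 2 * Real.log (2 + r) := by
              rw [Real.log_pow]; norm_num
            linarith
          have hln : 0 ≤ Real.log (2 * r + 2) := by
            apply Real.log_nonneg; linarith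
          calc (n : ℝ) * Real.log (2 * r + 2) ≤ (r + 1) * Real.log (2 * r + 2) :=
              mul_le_mul_of_nonneg_right hnr3 hln
            _ ≤ (r + 1) * (2 * Real.log (2 + r)) :=
              mul_le_mul_of_nonneg_left hb1 (by linarith)
            _ = 2 * (1 + r) * Real.log (2 + r) := by ring
        have hstrip := hM (z + n) hzn0 hzn2
        have hpi2 : π * Complex.abs (z + n) ≤ 5 * (1 + r) * Real.log (2 + r) := by
          have h5 : π ≤ 5 * Real.log 2 := by nlinarith
          calc π * Complex.abs (z + n) ≤ π * (1 + r) :=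
              mul_le_mul_of_nonneg_left hznabs pi_pos.le
            _ ≤ (5 * Real.log 2) * (1 + r) := mul_le_mul_of_nonneg_right h5 (by linarith)
            _ ≤ (5 * Real.log (2 + r)) * (1 + r) := by
              apply mul_le_mul_of_nonneg_right _ (by linarith)
              linarith
            _ = 5 * (1 + r) * Real.log (2 + r) := by ring
        rw [hkey, map_mul]
        calc Complex.abs P * Complex.abs (Complex.Gamma (z + n))⁻¹
            ≤ Real.exp (2 * (1 + r) * Real.log (2 + r)) *
              (M * Real.exp (5 * (1 + r) * Real.log (2 + r))) := by
              apply mul_le_mul _ _ (Complex.abs.nonneg _) (Real.exp_pos _).le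
              · calc Complex.abs P ≤ (2 * r + 2) ^ n := hPb
                  _ = Real.exp (n * Real.log (2 * r + 2)) := hpow
                  _ ≤ Real.exp (2 * (1 + r) * Real.log (2 + r)) := Real.exp_le_exp.2 hexplog
              · calc Complex.abs (Complex.Gamma (z + n))⁻¹
                    ≤ M * Real.exp (π * Complex.abs (z + n)) := hstrip
                  _ ≤ M * Real.exp (5 * (1 + r) * Real.log (2 + r)) := by
                    apply mul_le_mul_of_nonneg_left (Real.exp_le_exp.2 hpi2) (by linarith)
          _ = M * (Real.exp (2 * (1 + r) * Real.log (2 + r)) *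
                Real.exp (5 * (1 + r) * Real.log (2 + r))) := by ring
          _ = M * Real.exp (7 * (1 + r) * Real.log (2 + r)) := by
              rw [← Real.exp_add]; ring_nf
          _ ≤ (M + 7) * Real.exp ((M + 7) * (1 + r) * Real.log (2 + r)) := by
              have h7 : 7 * (1 + r) * Real.log (2 + r) ≤ (M + 7) * (1 + r) * Real.log (2 + r) := by
                apply mul_le_mul_of_nonneg_right _ hlogpos.le
                nlinarith
              exact mul_le_mul (by linarith) (Real.exp_le_exp.2 h7) (Real.exp_pos _).le (by linarith)
  · -- right case : 2 < z.re
    set m : ℕ := ⌈z.re⌉₊ - 2 with hm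
    have hceil1 : z.re ≤ (⌈z.re⌉₊ : ℝ) := Nat.le_ceil _
    have hceil2 : (⌈z.re⌉₊ : ℝ) < z.re + 1 := Nat.ceil_lt_add_one (by linarith)
    have hge3 : 2 ≤ ⌈z.re⌉₊ := by
      have : (2:ℕ) < ⌈z.re⌉₊ := Nat.lt_ceil.2 (by exact_mod_cast hre2)
      omega
    have hmr : (m : ℝ) = (⌈z.re⌉₊ : ℝ) - 2 := by
      rw [hm]; push_cast [Nat.cast_sub hge3]; ring
    set z' := z - (m : ℂ) with hz'
    have hz're : z'.re = z.re - m := by simp [hz']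
    have hz'1 : 1 < z'.re := by rw [hz're, hmr]; linarith
    have hz'2 : z'.re ≤ 2 := by rw [hz're, hmr]; linarith
    have hzk : ∀ k : ℕ, k < m → z' + (k : ℂ) ≠ 0 := by
      intro k _ h
      have : (z' + k).re = 0 := by rw [h]; simp
      rw [Complex.add_re, Complex.natCast_re] at this
      have hk0 : (0:ℝ) ≤ k := Nat.cast_nonneg k
      linarith
    have heq := my_shift z' m hzk
    have hz'm : z' + (m : ℂ) = z := by rw [hz']; ring
    rw [hz'm] at heq
    set P := ∏ k ∈ Finset.range m, (z' + (k : ℂ)) with hP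
    have hone : ∀ k : ℕ, (1:ℝ) ≤ Complex.abs (z' + (k:ℂ)) := by
      intro k
      have hk0 : (0:ℝ) ≤ k := Nat.cast_nonneg k
      have h1 : (1:ℝ) ≤ (z' + k).re := by
        rw [Complex.add_re, Complex.natCast_re]; linarith
      calc (1:ℝ) ≤ (z' + k).re := h1
        _ ≤ |(z' + k).re| := le_abs_self _
        _ ≤ Complex.abs (z' + k) := Complex.abs_re_le_abs _
    have hPb : 1 ≤ Complex.abs P := by
      rw [hP, map_prod]
      calc (1:ℝ) = ∏ _k ∈ Finset.range m, (1:ℝ) := by simp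
        _ ≤ ∏ k ∈ Finset.range m, Complex.abs (z' + (k:ℂ)) :=
            Finset.prod_le_prod (fun _ _ => zero_le_one) (fun k _ => hone k)
    have hPne : P ≠ 0 := fun h => by rw [h, map_zero] at hPb; linarith
    have hG' : Complex.Gamma z' ≠ 0 := Complex.Gamma_ne_zero_of_re_pos (by linarith)
    have hkey : (Complex.Gamma z)⁻¹ = P⁻¹ * (Complex.Gamma z')⁻¹ := by
      rw [heq, mul_inv]
    have hz'abs : Complex.abs z' ≤ r := by
      rw [hr, Complex.abs_apply, Complex.abs_apply]
      apply Real.sqrt_le_sqrt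
      rw [Complex.normSq_apply, Complex.normSq_apply]
      have h1 : z'.im = z.im := by simp [hz']
      have h2 : 0 ≤ z'.re := by linarith
      have h3 : z'.re ≤ z.re := by
        rw [hz're]
        have : (0:ℝ) ≤ m := Nat.cast_nonneg m
        linarith
      rw [h1, hz're] at *
      nlinarith
    have hPinv : Complex.abs P⁻¹ ≤ 1 := by
      rw [map_inv₀]
      exact inv_le_one_of_one_le₀ hPb
    rw [hkey, map_mul]
    calc Complex.abs P⁻¹ * Complex.abs (Complex.Gamma z')⁻¹
        ≤ 1 * (M * Real.exp (π * Complex.abs z')) := by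
          apply mul_le_mul hPinv (hM z' (by linarith) hz'2) (Complex.abs.nonneg _) zero_le_one
      _ = M * Real.exp (π * Complex.abs z') := by ring
      _ ≤ (M + 7) * Real.exp ((M + 7) * (1 + r) * Real.log (2 + r)) :=
          hstriptype z' hz'abs (by linarith) hz'2

/-- Growth bound for the reciprocal Gamma function. -/
theorem stmt_1 :
    ∃ C : ℝ, 0 < C ∧ ∀ z : ℂ,
      ‖(Complex.Gamma z)⁻¹‖ ≤ C * Real.exp (C * ‖z‖ * Real.log (1 + ‖z‖)) := by
  obtain ⟨A, hA1, hA⟩ := my_mid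
  have hA0 : (0:ℝ) < A := lt_of_lt_of_le one_pos hA1
  set C := A * Real.exp (2 * A * Real.log 3) + 4 * A with hC
  have hexp30 : (0:ℝ) < A * Real.exp (2 * A * Real.log 3) := by positivity
  have hC0 : 0 < C := by positivity
  have h4AC : 4 * A ≤ C := by linarith
  have hAC : A ≤ C := by linarith
  refine ⟨C, hC0, fun z => ?_⟩
  simp only [Complex.norm_eq_abs]
  set r := Complex.abs z with hr
  have hr0 : 0 ≤ r := Complex.abs.nonneg z
  have hlog1 : 0 ≤ Real.log (1 + r) := Real.log_nonneg (by linarith)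
  have hCexp : 1 ≤ Real.exp (C * r * Real.log (1 + r)) :=
    Real.one_le_exp (by positivity)
  have hmain := hA z
  rw [← hr] at hmain
  rcases le_or_gt r 1 with h1 | h1
  · have hl0 : 0 ≤ Real.log (2 + r) := Real.log_nonneg (by linarith)
    have e1 : A * (1 + r) * Real.log (2 + r) ≤ 2 * A * Real.log 3 := by
      have l3 : Real.log (2 + r) ≤ Real.log 3 := Real.log_le_log (by linarith) (by linarith)
      have l4 : A * (1 + r) ≤ 2 * A := by nlinarith
      calc A * (1 + r) * Real.log (2 + r) ≤ (2 * A) * Real.log (2 + r) :=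
          mul_le_mul_of_nonneg_right l4 hl0
        _ ≤ 2 * A * Real.log 3 := mul_le_mul_of_nonneg_left l3 (by positivity)
    calc Complex.abs (Complex.Gamma z)⁻¹
        ≤ A * Real.exp (A * (1 + r) * Real.log (2 + r)) := hmain
      _ ≤ A * Real.exp (2 * A * Real.log 3) :=
          mul_le_mul_of_nonneg_left (Real.exp_le_exp.2 e1) hA0.le
      _ ≤ C := by linarith
      _ ≤ C * Real.exp (C * r * Real.log (1 + r)) := le_mul_of_one_le_right hC0.le hCexp
  · have hl0 : 0 ≤ Real.log (2 + r) := Real.log_nonneg (by linarith)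
    have lp : 0 < Real.log (1 + r) := Real.log_pos (by linarith)
    have e2 : Real.log (2 + r) ≤ 2 * Real.log (1 + r) := by
      have e21 : Real.log (2 + r) ≤ Real.log ((1 + r) ^ 2) :=
        Real.log_le_log (by linarith) (by nlinarith)
      have e22 : Real.log ((1 + r) ^ 2) = 2 * Real.log (1 + r) := by
        rw [Real.log_pow]; norm_num
      linarith
    have e3 : A * (1 + r) * Real.log (2 + r) ≤ C * r * Real.log (1 + r) := by
      calc A * (1 + r) * Real.log (2 + r) ≤ A * (2 * r) * Real.log (2 + r) := by
            apply mul_le_mul_of_nonneg_right _ hl0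
            nlinarith
        _ ≤ A * (2 * r) * (2 * Real.log (1 + r)) := by
            apply mul_le_mul_of_nonneg_left e2 (by positivity)
        _ = 4 * A * (r * Real.log (1 + r)) := by ring
        _ ≤ C * (r * Real.log (1 + r)) := by
            apply mul_le_mul_of_nonneg_right h4AC (by positivity)
        _ = C * r * Real.log (1 + r) := by ring
    calc Complex.abs (Complex.Gamma z)⁻¹
        ≤ A * Real.exp (A * (1 + r) * Real.log (2 + r)) := hmain
      _ ≤ C * Real.exp (C * r * Real.log (1 + r)) :=
          mul_le_mul hAC (Real.exp_le_exp.2 e3) (Real.exp_pos _).le hC0.le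
end

section
/- Let $(\lambda_j)_{j \ge 1}$ be nonzero complex numbers with $\inf_j |\lambda_j| \ge c_0 > 0$, $|\mathrm{Im}(\lambda_j)| \ge \delta > 0$ for all $j$, $|\lambda_j| \ge C_1 j^{1-\varepsilon}$ for some $\varepsilon \in (0, 1/2)$, and counting bound $\#\{j : |\lambda_j| \le r\} \le C_2(1 + r^{1+\varepsilon})$. Then for all real $\lambda$, $\sum_{j=1}^{\infty} \left| \frac{1}{\lambda_j + \lambda} + \frac{1}{\lambda_j - \lambda} - \frac{2}{\lambda_j} \right| \le C (1 + |\lambda|)^{1+\varepsilon}$ for a constant $C$ depending only on $c_0, \delta, \varepsilon, C_1, C_2$. -/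
private lemma stmt_9_aux1 (C₂ a P : ℝ) (hC₂ : 0 < C₂) (ha : 0 < a) (hP : 1 ≤ P) :
    C₂ * (1 + a * P) ≤ C₂ * (1 + a) * P := by nlinarith

private lemma stmt_9_aux2 (ε C₁ x : ℝ) (hε0 : 0 < ε) (hε1 : ε < 1) (hC₁ : 0 < C₁) :
    8 * x ^ 2 / ((2 * (1 + |x|)) ^ (1 - ε) * C₁ ^ (2 + ε))
      ≤ 8 * (C₁ ^ (2 + ε))⁻¹ * (1 + |x|) ^ (1 + ε) := by
  have hx0 : (0:ℝ) ≤ |x| := abs_nonneg x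
  have hb : (0:ℝ) < 1 + |x| := by linarith
  have hr1 : (0:ℝ) < (1 + |x|) ^ (1 - ε) := Real.rpow_pos_of_pos hb _
  have hr2 : (0:ℝ) < (2 * (1 + |x|)) ^ (1 - ε) := Real.rpow_pos_of_pos (by linarith) _
  have hCp : (0:ℝ) < C₁ ^ (2 + ε) := Real.rpow_pos_of_pos hC₁ _
  have hsplit : (1 + |x|) ^ (1 - ε) * (1 + |x|) ^ (1 + ε) = (1 + |x|) ^ (2:ℕ) := by
    rw [← Real.rpow_add hb]
    rw [show (1 - ε) + (1 + ε) = ((2:ℕ):ℝ) by push_cast; ring, Real.rpow_natCast]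
  have hx2 : x ^ 2 ≤ (1 + |x|) ^ (2:ℕ) := by
    have h5 : x ^ 2 = |x| ^ 2 := (sq_abs x).symm
    nlinarith
  have hRr : (1 + |x|) ^ (1 - ε) ≤ (2 * (1 + |x|)) ^ (1 - ε) :=
    Real.rpow_le_rpow hb.le (by linarith) (by linarith)
  have hxR : x ^ 2 / (2 * (1 + |x|)) ^ (1 - ε) ≤ (1 + |x|) ^ (1 + ε) := by
    have h1 : x ^ 2 / (2 * (1 + |x|)) ^ (1 - ε) ≤ x ^ 2 / (1 + |x|) ^ (1 - ε) :=
      div_le_div_of_nonneg_left (by positivity) hr1 hRr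
    have h2 : x ^ 2 / (1 + |x|) ^ (1 - ε) ≤ (1 + |x|) ^ (2:ℕ) / (1 + |x|) ^ (1 - ε) :=
      (div_le_div_iff_of_pos_right hr1).mpr hx2
    have h3 : (1 + |x|) ^ (2:ℕ) / (1 + |x|) ^ (1 - ε) = (1 + |x|) ^ (1 + ε) := by
      rw [← hsplit, mul_comm, mul_div_assoc, div_self hr1.ne', mul_one]
    linarith [h3 ▸ h2]
  have hKeq : 8 * x ^ 2 / ((2 * (1 + |x|)) ^ (1 - ε) * C₁ ^ (2 + ε))
      = 8 * (C₁ ^ (2 + ε))⁻¹ * (x ^ 2 / (2 * (1 + |x|)) ^ (1 - ε)) := by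
    field_simp
  rw [hKeq]
  exact mul_le_mul_of_nonneg_left hxR (by positivity)

/-- Uniform summability estimate for the Hadamard-factorization expansion,
with a constant depending only on `c₀, δ, ε, C₁, C₂`. -/
theorem stmt_9 (c₀ δ ε C₁ C₂ : ℝ) (hc₀ : 0 < c₀) (hδ : 0 < δ)
    (hε0 : 0 < ε) (hε : ε < 1 / 2) (hC₁ : 0 < C₁) (hC₂ : 0 < C₂) :
    ∃ C : ℝ, 0 < C ∧
      ∀ lam : ℕ → ℂ,
        (∀ j, 1 ≤ j → lam j ≠ 0) →
        (∀ j, 1 ≤ j → c₀ ≤ ‖lam j‖) →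
        (∀ j, 1 ≤ j → δ ≤ |(lam j).im|) →
        (∀ j : ℕ, 1 ≤ j → C₁ * (j : ℝ) ^ (1 - ε) ≤ ‖lam j‖) →
        (∀ r : ℝ, 0 < r →
          {j : ℕ | 1 ≤ j ∧ ‖lam j‖ ≤ r}.Finite ∧
          (Nat.card {j : ℕ | 1 ≤ j ∧ ‖lam j‖ ≤ r} : ℝ) ≤ C₂ * (1 + r ^ (1 + ε))) →
        ∀ lamr : ℝ,
          (Summable fun j : ℕ =>
            ‖1 / (lam (j + 1) + lamr) + 1 / (lam (j + 1) - lamr) - 2 / lam (j + 1)‖) ∧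
          (∑' j : ℕ,
            ‖1 / (lam (j + 1) + lamr) + 1 / (lam (j + 1) - lamr) - 2 / lam (j + 1)‖)
            ≤ C * (1 + |lamr|) ^ (1 + ε) := by
  set p : ℝ := (1 - ε) * (2 + ε) with hpdef
  have hp1 : 1 < p := by nlinarith
  have hsumZ : Summable (fun j : ℕ => (((j : ℝ) + 1) ^ p)⁻¹) := by
    have h := (summable_nat_add_iff (f := fun n : ℕ => ((n : ℝ) ^ p)⁻¹) 1).mpr
      (Real.summable_nat_rpow_inv.mpr hp1)
    simpa [Nat.cast_add] using h
  set Z : ℝ := ∑' j : ℕ, (((j : ℝ) + 1) ^ p)⁻¹ with hZdef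
  have hZ0 : 0 ≤ Z := tsum_nonneg fun j => by positivity
  set C : ℝ := (2 / δ + 2 / c₀) * (C₂ * (1 + 2 ^ (1 + ε))) + 8 * (C₁ ^ (2 + ε))⁻¹ * Z + 1
    with hCdef
  have hCpos : 0 < C := by
    have h1 : 0 ≤ (2 / δ + 2 / c₀) * (C₂ * (1 + 2 ^ (1 + ε))) := by positivity
    have h2 : 0 ≤ 8 * (C₁ ^ (2 + ε))⁻¹ * Z := by
      apply mul_nonneg _ hZ0; positivity
    simp only [hCdef]; linarith
  refine ⟨C, hCpos, ?_⟩
  intro lam h0 hc hi hgrow hcount x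
  set R : ℝ := 2 * (1 + |x|) with hRdef
  have hx0 : 0 ≤ |x| := abs_nonneg x
  have hRpos : 0 < R := by positivity
  obtain ⟨hSfin, hScard⟩ := hcount R hRpos
  set f : ℕ → ℝ := fun j =>
    ‖1 / (lam (j + 1) + x) + 1 / (lam (j + 1) - x) - 2 / lam (j + 1)‖ with hfdef
  have hf0 : ∀ j, 0 ≤ f j := fun j => norm_nonneg _
  -- the "small" index set
  set T : Set ℕ := {j : ℕ | ‖lam (j + 1)‖ ≤ R} with hTdef
  have hTfin : T.Finite := by
    have hsub : T ⊆ (fun j : ℕ => j + 1) ⁻¹' {j : ℕ | 1 ≤ j ∧ ‖lam j‖ ≤ R} := by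
      intro j hj; exact ⟨Nat.le_add_left 1 j, hj⟩
    exact (hSfin.preimage ((add_left_injective 1).injOn)).subset hsub
  have him : ∀ j : ℕ, δ ≤ |(lam (j + 1)).im| := fun j => hi (j + 1) (Nat.le_add_left 1 j)
  have hcabs : ∀ j : ℕ, c₀ ≤ ‖lam (j + 1)‖ := fun j => hc (j + 1) (Nat.le_add_left 1 j)
  -- bounds on the three individual pieces
  have hinv : ∀ (j : ℕ) (y : ℝ), ‖1 / (lam (j + 1) + (y : ℂ))‖ ≤ 1 / δ := by
    intro j y
    rw [norm_div, norm_one]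
    have him2 : δ ≤ |(lam (j + 1) + (y : ℂ)).im| := by
      simpa using him j
    have : δ ≤ ‖lam (j + 1) + (y : ℂ)‖ :=
      him2.trans (Complex.abs_im_le_norm _)
    exact one_div_le_one_div_of_le hδ this
  have hsmall : ∀ j : ℕ, f j ≤ 2 / δ + 2 / c₀ := by
    intro j
    have h1 : ‖1 / (lam (j + 1) + (x : ℂ))‖ ≤ 1 / δ := hinv j x
    have h2 : ‖1 / (lam (j + 1) - (x : ℂ))‖ ≤ 1 / δ := by
      have := hinv j (-x)
      simpa [sub_eq_add_neg] using this
    have h3 : ‖2 / lam (j + 1)‖ ≤ 2 / c₀ := by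
      rw [norm_div]
      have h4 : ‖(2 : ℂ)‖ = 2 := by simp
      rw [h4]
      exact div_le_div_of_nonneg_left (by norm_num) hc₀ (hcabs j)
    calc f j ≤ ‖1 / (lam (j + 1) + (x : ℂ)) + 1 / (lam (j + 1) - (x : ℂ))‖
          + ‖2 / lam (j + 1)‖ := by
          simpa [hfdef, sub_eq_add_neg] using
            norm_add_le (1 / (lam (j + 1) + (x : ℂ)) + 1 / (lam (j + 1) - (x : ℂ)))
              (-(2 / lam (j + 1)))
      _ ≤ ‖1 / (lam (j + 1) + (x : ℂ))‖ + ‖1 / (lam (j + 1) - (x : ℂ))‖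
          + ‖2 / lam (j + 1)‖ := by
          have := norm_add_le (1 / (lam (j + 1) + (x : ℂ))) (1 / (lam (j + 1) - (x : ℂ)))
          linarith
      _ ≤ 1 / δ + 1 / δ + 2 / c₀ := by linarith
      _ = 2 / δ + 2 / c₀ := by ring
  -- tail bound
  set K : ℝ := 8 * x ^ 2 / (R ^ (1 - ε) * C₁ ^ (2 + ε)) with hKdef
  have hRe : (0:ℝ) < R ^ (1 - ε) := Real.rpow_pos_of_pos hRpos _
  have hC1e : (0:ℝ) < C₁ ^ (2 + ε) := Real.rpow_pos_of_pos hC₁ _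
  have hK0 : 0 ≤ K := div_nonneg (by positivity) (mul_pos hRe hC1e).le
  have htail : ∀ j : ℕ, j ∉ T → f j ≤ K * (((j : ℝ) + 1) ^ p)⁻¹ := by
    intro j hj
    set a : ℂ := lam (j + 1) with hadef
    set A : ℝ := ‖a‖ with hAdef
    have hA : R < A := lt_of_not_ge hj
    have hApos : 0 < A := hRpos.trans hA
    have hxA : |x| < A / 2 := by
      simp only [hRdef] at hA; linarith
    have haim : (0:ℝ) < |a.im| := lt_of_lt_of_le hδ (him j)
    have ha0 : a ≠ 0 := by
      intro h; rw [h] at haim; simp at haim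
    have hapx : a + (x : ℂ) ≠ 0 := by
      intro h
      have h2 : (a + (x : ℂ)).im = 0 := by rw [h]; simp
      simp [Complex.add_im] at h2
      rw [h2] at haim; simp at haim
    have hamx : a - (x : ℂ) ≠ 0 := by
      intro h
      have h2 : (a - (x : ℂ)).im = 0 := by rw [h]; simp
      simp [Complex.sub_im] at h2
      rw [h2] at haim; simp at haim
    have hid : 1 / (a + (x : ℂ)) + 1 / (a - (x : ℂ)) - 2 / a
        = 2 * (x : ℂ) ^ 2 / (a * (a - (x : ℂ)) * (a + (x : ℂ))) := by
      field_simp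
      ring
    have hnum : ‖2 * (x : ℂ) ^ 2‖ = 2 * x ^ 2 := by
      rw [norm_mul, norm_pow, Complex.norm_real, Complex.norm_two, Real.norm_eq_abs, sq_abs]
    have hfeq : f j = 2 * x ^ 2 /
        (A * ‖a - (x : ℂ)‖ * ‖a + (x : ℂ)‖) := by
      show ‖1 / (a + (x : ℂ)) + 1 / (a - (x : ℂ)) - 2 / a‖ = _
      rw [hid, norm_div, hnum, norm_mul, norm_mul]
    -- lower bounds for the denominator pieces
    have hxabs : ‖(x : ℂ)‖ = |x| := by simp
    have hmx : A / 2 ≤ ‖a - (x : ℂ)‖ := by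
      have h1 : A ≤ ‖a - (x : ℂ)‖ + |x| := by
        have := norm_add_le (a - (x : ℂ)) ((x : ℂ))
        simpa [hxabs] using this
      linarith
    have hpx : A / 2 ≤ ‖a + (x : ℂ)‖ := by
      have h1 : A ≤ ‖a + (x : ℂ)‖ + |x| := by
        have := norm_add_le (a + (x : ℂ)) (-(x : ℂ))
        simpa [hxabs] using this
      linarith
    -- A^3 lower bound via rpow splitting
    have hA3 : A ^ (1 - ε) * A ^ (2 + ε) = A * A * A := by
      rw [← Real.rpow_add hApos]
      have h3 : (1 - ε) + (2 + ε) = ((3 : ℕ) : ℝ) := by norm_num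
      rw [h3, Real.rpow_natCast]; ring
    have hA1 : R ^ (1 - ε) ≤ A ^ (1 - ε) :=
      Real.rpow_le_rpow hRpos.le hA.le (by linarith)
    have hA2 : C₁ ^ (2 + ε) * ((j : ℝ) + 1) ^ p ≤ A ^ (2 + ε) := by
      have hg := hgrow (j + 1) (Nat.le_add_left 1 j)
      have hn : ((j + 1 : ℕ) : ℝ) = (j : ℝ) + 1 := by push_cast; ring
      rw [hn] at hg
      have hj1 : (0:ℝ) ≤ (j : ℝ) + 1 := by positivity
      have h1 : (C₁ * ((j : ℝ) + 1) ^ (1 - ε)) ^ (2 + ε) ≤ A ^ (2 + ε) :=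
        Real.rpow_le_rpow (by positivity) hg (by linarith)
      calc C₁ ^ (2 + ε) * ((j : ℝ) + 1) ^ p
          = (C₁ * ((j : ℝ) + 1) ^ (1 - ε)) ^ (2 + ε) := by
            rw [Real.mul_rpow hC₁.le (by positivity), hpdef, Real.rpow_mul hj1]
        _ ≤ A ^ (2 + ε) := h1
    have habs1 : 0 ≤ ‖a - (x : ℂ)‖ := norm_nonneg _
    have habs2 : 0 ≤ ‖a + (x : ℂ)‖ := norm_nonneg _
    have hden : R ^ (1 - ε) * C₁ ^ (2 + ε) * ((j : ℝ) + 1) ^ p / 4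
        ≤ A * ‖a - (x : ℂ)‖ * ‖a + (x : ℂ)‖ := by
      have h2 : R ^ (1 - ε) * (C₁ ^ (2 + ε) * ((j : ℝ) + 1) ^ p) ≤ A ^ (1 - ε) * A ^ (2 + ε) :=
        mul_le_mul hA1 hA2 (by positivity) (by positivity)
      rw [hA3] at h2
      have s1 : A * (A / 2) ≤ A * ‖a - (x : ℂ)‖ :=
        mul_le_mul_of_nonneg_left hmx hApos.le
      have s2 : A * (A / 2) * (A / 2) ≤ A * ‖a - (x : ℂ)‖ * ‖a + (x : ℂ)‖ :=
        mul_le_mul s1 hpx (by linarith) (mul_nonneg hApos.le habs1)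
      calc R ^ (1 - ε) * C₁ ^ (2 + ε) * ((j : ℝ) + 1) ^ p / 4
          ≤ A * A * A / 4 := by linarith
        _ = A * (A / 2) * (A / 2) := by ring
        _ ≤ A * ‖a - (x : ℂ)‖ * ‖a + (x : ℂ)‖ := s2
    have hjp : (0:ℝ) < ((j : ℝ) + 1) ^ p := Real.rpow_pos_of_pos (by positivity) _
    have hdenpos : (0:ℝ) < R ^ (1 - ε) * C₁ ^ (2 + ε) * ((j : ℝ) + 1) ^ p / 4 :=
      div_pos (mul_pos (mul_pos hRe hC1e) hjp) (by norm_num)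
    calc f j = 2 * x ^ 2 / (A * ‖a - (x : ℂ)‖ * ‖a + (x : ℂ)‖) := hfeq
      _ ≤ 2 * x ^ 2 / (R ^ (1 - ε) * C₁ ^ (2 + ε) * ((j : ℝ) + 1) ^ p / 4) :=
          div_le_div_of_nonneg_left (by positivity) hdenpos hden
      _ = K * (((j : ℝ) + 1) ^ p)⁻¹ := by
          rw [hKdef]
          have hj1 : (0:ℝ) < ((j : ℝ) + 1) ^ p := by positivity
          field_simp
          ring
  -- the majorant
  set g : ℕ → ℝ := fun j => T.indicator (fun _ => 2 / δ + 2 / c₀) j + K * (((j : ℝ) + 1) ^ p)⁻¹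
    with hgdef
  have hfg : ∀ j, f j ≤ g j := by
    intro j
    by_cases hj : j ∈ T
    · have h1 : T.indicator (fun _ : ℕ => 2 / δ + 2 / c₀) j = 2 / δ + 2 / c₀ :=
        Set.indicator_of_mem hj _
      simp only [hgdef, h1]
      have h2 : 0 ≤ K * (((j : ℝ) + 1) ^ p)⁻¹ := mul_nonneg hK0 (by positivity)
      linarith [hsmall j]
    · have h1 : T.indicator (fun _ : ℕ => 2 / δ + 2 / c₀) j = 0 := Set.indicator_of_notMem hj _
      simp only [hgdef, h1, zero_add]
      exact htail j hj
  have hindsum : Summable (T.indicator (fun _ : ℕ => 2 / δ + 2 / c₀)) := by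
    apply summable_of_ne_finset_zero (s := hTfin.toFinset)
    intro b hb
    exact Set.indicator_of_notMem (fun h => hb (hTfin.mem_toFinset.mpr h)) _
  have hgsum : Summable g := hindsum.add (hsumZ.mul_left K)
  have hfsum : Summable f := Summable.of_nonneg_of_le hf0 hfg hgsum
  refine ⟨hfsum, ?_⟩
  have hbase1 : (1:ℝ) ≤ 1 + |x| := by linarith
  have hP0 : (0:ℝ) ≤ (1 + |x|) ^ (1 + ε) := by positivity
  have hP1 : (1:ℝ) ≤ (1 + |x|) ^ (1 + ε) := Real.one_le_rpow hbase1 (by linarith)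
  -- tsum of indicator
  have htind : ∑' j : ℕ, T.indicator (fun _ : ℕ => 2 / δ + 2 / c₀) j
      = (hTfin.toFinset.card : ℝ) * (2 / δ + 2 / c₀) := by
    rw [tsum_eq_sum (s := hTfin.toFinset)
      (fun b hb => Set.indicator_of_notMem (fun h => hb (hTfin.mem_toFinset.mpr h)) _)]
    rw [Finset.sum_congr rfl (fun b hb => Set.indicator_of_mem (hTfin.mem_toFinset.mp hb) _)]
    rw [Finset.sum_const, nsmul_eq_mul]
  -- cardinality bound
  have hcard : (hTfin.toFinset.card : ℝ) ≤ C₂ * (1 + 2 ^ (1 + ε)) * (1 + |x|) ^ (1 + ε) := by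
    have h1 : hTfin.toFinset.card = T.ncard := (Set.ncard_eq_toFinset_card T hTfin).symm
    have h2 : T.ncard ≤ {j : ℕ | 1 ≤ j ∧ ‖lam j‖ ≤ R}.ncard := by
      exact Set.ncard_le_ncard_of_injOn (fun j => j + 1)
        (fun j hj => ⟨Nat.le_add_left 1 j, hj⟩) ((add_left_injective 1).injOn) hSfin
    have h3 : (Nat.card {j : ℕ | 1 ≤ j ∧ ‖lam j‖ ≤ R} : ℝ) ≤ C₂ * (1 + R ^ (1 + ε)) :=
      hScard
    rw [Nat.card_coe_set_eq] at h3
    have h4 : (hTfin.toFinset.card : ℝ) ≤ C₂ * (1 + R ^ (1 + ε)) := by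
      calc (hTfin.toFinset.card : ℝ) = (T.ncard : ℝ) := by rw [h1]
        _ ≤ ({j : ℕ | 1 ≤ j ∧ ‖lam j‖ ≤ R}.ncard : ℝ) := by exact_mod_cast h2
        _ ≤ C₂ * (1 + R ^ (1 + ε)) := h3
    have hRpow : R ^ (1 + ε) = 2 ^ (1 + ε) * (1 + |x|) ^ (1 + ε) := by
      rw [hRdef, Real.mul_rpow (by norm_num) (by linarith)]
    have h2pow : (0:ℝ) < 2 ^ (1 + ε) := by positivity
    calc (hTfin.toFinset.card : ℝ) ≤ C₂ * (1 + R ^ (1 + ε)) := h4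
      _ = C₂ * (1 + 2 ^ (1 + ε) * (1 + |x|) ^ (1 + ε)) := by rw [hRpow]
      _ ≤ C₂ * (1 + 2 ^ (1 + ε)) * (1 + |x|) ^ (1 + ε) :=
          stmt_9_aux1 C₂ _ _ hC₂ h2pow hP1
  -- K bound
  have hKbound : K ≤ 8 * (C₁ ^ (2 + ε))⁻¹ * (1 + |x|) ^ (1 + ε) := by
    rw [hKdef, hRdef]
    exact stmt_9_aux2 ε C₁ x hε0 (hε.trans (by norm_num)) hC₁
  -- assemble
  have htg : ∑' j, g j = (hTfin.toFinset.card : ℝ) * (2 / δ + 2 / c₀) + K * Z := by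
    rw [hgdef]
    rw [Summable.tsum_add hindsum (hsumZ.mul_left K), htind, tsum_mul_left]
  calc ∑' j, f j ≤ ∑' j, g j := Summable.tsum_le_tsum hfg hfsum hgsum
    _ = (hTfin.toFinset.card : ℝ) * (2 / δ + 2 / c₀) + K * Z := htg
    _ ≤ (C₂ * (1 + 2 ^ (1 + ε)) * (1 + |x|) ^ (1 + ε)) * (2 / δ + 2 / c₀)
        + (8 * (C₁ ^ (2 + ε))⁻¹ * (1 + |x|) ^ (1 + ε)) * Z := by
        have hpos : (0:ℝ) ≤ 2 / δ + 2 / c₀ := by positivity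
        exact add_le_add (mul_le_mul_of_nonneg_right hcard hpos)
          (mul_le_mul_of_nonneg_right hKbound hZ0)
    _ = ((2 / δ + 2 / c₀) * (C₂ * (1 + 2 ^ (1 + ε))) + 8 * (C₁ ^ (2 + ε))⁻¹ * Z)
        * (1 + |x|) ^ (1 + ε) := by ring
    _ ≤ C * (1 + |x|) ^ (1 + ε) := by
        apply mul_le_mul_of_nonneg_right _ hP0
        rw [hCdef]
        exact le_add_of_nonneg_right (by norm_num)
end
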